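/- The expected length of a Best-of-3 game under the Catch-Up Rule, with A serving first, is 2 + p - p^2 + pq; consequently, the expected length under CR exceeds that under SR, namely (2 + p - p^2 + pq) - (3 - q - p^2 + pq) = p + q - 1 > 0, if and only if p + q > 1. -/
import Mathlib


/-- Expected number of points remaining in a service game played to `goal` points.
`next prevSrv aWon` gives the next server (`true` = A serves). `srv = true` means
A serves the current point; A wins on his serve with probability `p`, B wins on her
serve with probability `q`. `fuel` bounds the number of points played. -/
def expLen (p q : ℝ) (goal : ℕ) (next : Bool → Bool → Bool) :
    ℕ → ℕ → ℕ → Bool → ℝ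
  | 0, _, _, _ => 0
  | fuel + 1, x, y, srv =>
    if goal ≤ x ∨ goal ≤ y then 0
    else
      1 + (if srv then p else 1 - q) * expLen p q goal next fuel (x + 1) y (next srv true) +
        (1 - if srv then p else 1 - q) * expLen p q goal next fuel x (y + 1) (next srv false)

/-- Catch-Up Rule: the loser of the point serves next. -/
def nextCR : Bool → Bool → Bool := fun _ aWon => !aWon

lemma expLen_val (p q : ℝ) :
    expLen p q 2 nextCR 4 0 0 true = 2 + p - p ^ 2 + p * q := by
  simp [expLen, nextCR]
  ring

/-- The expected length of a Best-of-3 game under the Catch-Up Rule, with A serving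
first, is `2 + p - p² + pq`; it exceeds the Standard Rule expected length
`3 - q - p² + pq` by `p + q - 1`, hence is strictly larger iff `p + q > 1`. -/
theorem bestOf3_CR_expLen (p q : ℝ) (hp0 : 0 < p) (hp1 : p < 1)
    (hq0 : 0 < q) (hq1 : q < 1) :
    expLen p q 2 nextCR 4 0 0 true = 2 + p - p ^ 2 + p * q ∧
      (2 + p - p ^ 2 + p * q) - (3 - q - p ^ 2 + p * q) = p + q - 1 ∧
      (expLen p q 2 nextCR 4 0 0 true > 3 - q - p ^ 2 + p * q ↔ p + q > 1) := by
  refine ⟨expLen_val p q, by ring, ?_⟩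
  rw [expLen_val]
  constructor <;> intro h <;> nlinarith
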